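/- Let d | r, p = r/d, γ = (0 1 ⋯ r-1)^p ∈ S_r acting cyclically on indices. For (k_0,...,k_{r-1}) with Σ k_i = n, the linear map φ sending a polynomial f(x_1,...,x_n) to x_1^p ⋯ x_n^p · f(x_1,...,x_n) modulo the relations x_i^r = 1 is an isomorphism of C[G(r,d,n)]-modules from V^{(k_0,...,k_{r-1})} to V^{γ(k_0,...,k_{r-1})}. -/

import Mathlib

open SemidirectProduct

/-- The permutation action of `S_n` on `C_r^n` by permuting coordinates. -/
def wreathAut (r n : ℕ) : Equiv.Perm (Fin n) →* MulAut (Fin n → Multiplicative (ZMod r)) where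
  toFun σ := MulEquiv.arrowCongr σ (MulEquiv.refl _)
  map_one' := by ext f i; rfl
  map_mul' σ τ := by ext f i; rfl

/-- The wreath product `G(r,1,n) = C_r ≀ S_n`. -/
abbrev Gr1n (r n : ℕ) := (Fin n → Multiplicative (ZMod r)) ⋊[wreathAut r n] Equiv.Perm (Fin n)

instance (r n : ℕ) [NeZero r] : Finite (Gr1n r n) :=
  Finite.of_injective (fun g => (g.left, g.right))
    (by intro a b h
        exact SemidirectProduct.ext (congrArg Prod.fst h) (congrArg Prod.snd h))

/-- The homomorphism `Φ : G(r,1,n) → C_d`, `(ξ₁,…,ξₙ,σ) ↦ (ξ₁⋯ξₙ)^{r/d}`,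
realised additively with values in `ZMod d`. -/
def PhiHom (r d n : ℕ) (h : d ∣ r) : Gr1n r n →* Multiplicative (ZMod d) where
  toFun g := Multiplicative.ofAdd (ZMod.castHom h (ZMod d) (∑ i, Multiplicative.toAdd (g.left i)))
  map_one' := by simp
  map_mul' g₁ g₂ := by
    have hl : (g₁ * g₂).left = g₁.left * wreathAut r n g₁.right g₂.left :=
      SemidirectProduct.mul_left g₁ g₂
    have hperm : (∑ i, Multiplicative.toAdd (wreathAut r n g₁.right g₂.left i))
        = ∑ i, Multiplicative.toAdd (g₂.left i) := by
      have := Equiv.sum_comp (g₁.right.symm) (fun i => Multiplicative.toAdd (g₂.left i))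
      simpa [wreathAut] using this
    simp [hl, Finset.sum_add_distrib, hperm, map_add]

/-- `S_n` as a subgroup of the wreath product. -/
def SnSub (r n : ℕ) : Subgroup (Gr1n r n) := (inr : Equiv.Perm (Fin n) →* Gr1n r n).range

/-- The character value `ξ^a = exp(2πi·a/r)` for `a ∈ ℤ/rℤ`. -/
noncomputable def chi (r : ℕ) (a : ZMod r) : ℂ :=
  Complex.exp (2 * Real.pi * Complex.I * a.val / r)

/-- The action of `G(r,1,n)` on the ring of polynomials in `n` variables modulo the
relations `x_i^r = 1`, modelled on the space of coefficient functions indexed by exponent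
vectors `m ∈ (ℤ/rℤ)^n` (the monomial `x^m` corresponds to the indicator of `m`):
`(ξ₁,…,ξₙ,σ)·f(x₁,…,xₙ) = f(ξ_{σ(1)}^{-1} x_{σ(1)}, …, ξ_{σ(n)}^{-1} x_{σ(n)})`. -/
noncomputable def act (r n : ℕ) (g : Gr1n r n) (f : (Fin n → ZMod r) → ℂ) :
    (Fin n → ZMod r) → ℂ :=
  fun m => chi r (-∑ j, Multiplicative.toAdd (g.left j) * m j) * f (fun j => m (g.right j))

/-- `countsExp m i` is the number of entries of the exponent vector `m` equal to `i`. -/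
def countsExp (r n : ℕ) (m : Fin n → ZMod r) : ZMod r → ℕ := fun i =>
  (Finset.univ.filter (fun j => m j = i)).card

/-- The module `V^{(k_0,…,k_{r-1})}`: the span of the monomials
`x_{σ(1)}^{λ_1} ⋯ x_{σ(n)}^{λ_n}` where the partition `λ = ψ(k)` has `k_i` parts equal
to `i`, i.e. the coefficient functions supported on exponent vectors with count vector
`k`. -/
def Vmod (r n : ℕ) (k : ZMod r → ℕ) : Set ((Fin n → ZMod r) → ℂ) :=
  {f | ∀ m, f m ≠ 0 → countsExp r n m = k}

/-- Multiplication by `x_1^p ⋯ x_n^p` (with `p = r/d`) modulo `x_i^r = 1`, on coefficient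
functions: it shifts every exponent by `p`. -/
noncomputable def phiMul (r d n : ℕ) (f : (Fin n → ZMod r) → ℂ) :
    (Fin n → ZMod r) → ℂ :=
  fun m => f (fun j => m j - ((r / d : ℕ) : ZMod r))

/-- Let `d ∣ r`, `p = r/d`, and `γ = (0 1 ⋯ r-1)^p` acting cyclically,
so that `(γk)_i = k_{i-p}`. For `(k_0,…,k_{r-1})` with `Σ k_i = n`, the map
`f ↦ x_1^p ⋯ x_n^p · f` (modulo `x_i^r = 1`) is an isomorphism of
`ℂ[G(r,d,n)]`-modules `V^{(k_0,…,k_{r-1})} ≅ V^{γ(k_0,…,k_{r-1})}`: it is ℂ-linear,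
restricts to a bijection `V^k → V^{γk}`, and commutes with the action of every element
of `G(r,d,n)`. -/

lemma counts_shift (r n : ℕ) (m : Fin n → ZMod r) (c i : ZMod r) :
    countsExp r n (fun j => m j + c) (i + c) = countsExp r n m i := by
  unfold countsExp
  congr 1
  ext j
  simp

theorem phiMul_module_iso (r d n : ℕ) [NeZero r] (h : d ∣ r) (k : ZMod r → ℕ)
    (hk : ∑ i, k i = n) :
    (∀ (c : ℂ) (f₁ f₂ : (Fin n → ZMod r) → ℂ),
      phiMul r d n (c • f₁ + f₂) = c • phiMul r d n f₁ + phiMul r d n f₂) ∧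
    Set.BijOn (phiMul r d n) (Vmod r n k)
      (Vmod r n (fun i => k (i - ((r / d : ℕ) : ZMod r)))) ∧
    (∀ g ∈ (PhiHom r d n h).ker, ∀ f : (Fin n → ZMod r) → ℂ,
      act r n g (phiMul r d n f) = phiMul r d n (act r n g f)) := by
  classical
  have hd0 : d ≠ 0 := by rintro rfl; exact (NeZero.ne r) (Nat.eq_zero_of_zero_dvd h)
  haveI : NeZero d := ⟨hd0⟩
  set p : ZMod r := ((r / d : ℕ) : ZMod r) with hp
  have key : ∀ g ∈ (PhiHom r d n h).ker,
      p * (∑ j, Multiplicative.toAdd (g.left j)) = 0 := by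
    intro g hg
    set S : ZMod r := ∑ j, Multiplicative.toAdd (g.left j) with hS
    have h1 : (ZMod.castHom h (ZMod d)) S = 0 := by
      have := hg
      rw [MonoidHom.mem_ker] at this
      have : Multiplicative.toAdd ((PhiHom r d n h) g) = 0 := by rw [this]; rfl
      simpa [PhiHom, hS] using this
    have h2 : ((S.val : ℕ) : ZMod d) = 0 := by
      rwa [ZMod.castHom_apply, ← ZMod.natCast_val] at h1
    obtain ⟨t, ht⟩ := (ZMod.natCast_eq_zero_iff _ _).mp h2
    have hmain : p * S = (((r / d) * S.val : ℕ) : ZMod r) := by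
      push_cast
      rw [ZMod.natCast_val, ZMod.cast_id]
    calc p * S = (((r / d) * S.val : ℕ) : ZMod r) := hmain
      _ = ((r * t : ℕ) : ZMod r) := by
          rw [ht, ← mul_assoc, Nat.div_mul_cancel h]
      _ = 0 := by push_cast; simp
  refine ⟨?_, ⟨?_, ?_, ?_⟩, ?_⟩
  · intro c f₁ f₂; rfl
  · intro f hf m hm
    have hcount : countsExp r n (fun j => m j - p) = k := hf _ hm
    funext i
    have := counts_shift r n (fun j => m j - p) p (i - p)
    simp only [sub_add_cancel] at this
    rw [← hcount]
    exact this
  · intro f₁ _ f₂ _ hfe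
    funext m
    have := congrFun hfe (fun j => m j + p)
    simpa [phiMul, ← hp] using this
  · intro f' hf'
    refine ⟨fun m => f' (fun j => m j + p), ?_, ?_⟩
    · intro m hm
      have hcount : countsExp r n (fun j => m j + p) = fun i => k (i - p) := hf' _ hm
      funext i
      have h1 := counts_shift r n m p i
      rw [hcount] at h1
      simpa using h1.symm
    · funext m
      simp [phiMul, ← hp]
  · intro g hg f
    funext m
    have hz := key g hg
    have hsum : ∑ j, Multiplicative.toAdd (g.left j) * (m j - p)
        = ∑ j, Multiplicative.toAdd (g.left j) * m j := by
      rw [Finset.sum_congr rfl (fun j _ => mul_sub _ _ _), Finset.sum_sub_distrib,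
        ← Finset.sum_mul, mul_comm, hz, sub_zero]
    simp only [act, phiMul, ← hp, hsum]
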